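/- Let a, b : ℕ → ℤ both satisfy a i = a (4k+2 - i) and b i = b (4k'+2 - i) on their supports [0, 4k+2] and [0, 4k'+2] respectively (possibly k ≠ k'), and suppose ∑(-1)^i a i = ∑(-1)^i b i. Then ∑ a i ≡ ∑ b i (mod 4). -/

import Mathlib

open Finset

lemma key_div4 (k : ℕ) (a : ℕ → ℤ) (hdual : ∀ i ≤ 4 * k + 2, a i = a (4 * k + 2 - i)) :
    (4 : ℤ) ∣ ∑ i ∈ range (4 * k + 3), (1 + (-1) ^ i) * a i := by
  set c : ℕ → ℤ := fun i => (1 + (-1) ^ i) * a i with hc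
  have hceven : ∀ i, Even (c i) := by
    intro i
    rcases Nat.even_or_odd i with h | h
    · have : ((-1 : ℤ)) ^ i = 1 := h.neg_one_pow
      simp [hc, this]
    · have : ((-1 : ℤ)) ^ i = -1 := h.neg_one_pow
      simp [hc, this]
  have hcsym : ∀ i ≤ 4 * k + 2, c i = c (4 * k + 2 - i) := by
    intro i hi
    have hpow : ((-1 : ℤ)) ^ (4 * k + 2 - i) = (-1) ^ i := by
      have h1 : (4 * k + 2 - i) + i = 4 * k + 2 := Nat.sub_add_cancel hi
      have h2 : ((-1 : ℤ)) ^ ((4 * k + 2 - i) + i) = 1 := by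
        rw [h1]; simp [pow_add, pow_mul]
      rcases Nat.even_or_odd i with h | h
      · rw [h.neg_one_pow]
        rw [pow_add, h.neg_one_pow, mul_one] at h2
        exact h2
      · rw [h.neg_one_pow]
        rw [pow_add, h.neg_one_pow] at h2
        linarith
    simp only [hc, hpow, hdual i hi]
  have hmid : c (2 * k + 1) = 0 := by
    have : Odd (2 * k + 1) := odd_two_mul_add_one k
    simp [hc, this.neg_one_pow]
  have hsplit : ∑ i ∈ range (4 * k + 3), c i
      = ∑ i ∈ range (2 * k + 2), c i + ∑ i ∈ Ico (2 * k + 2) (4 * k + 3), c i := by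
    rw [range_eq_Ico, ← Finset.sum_Ico_consecutive c (show 0 ≤ 2 * k + 2 by omega)
      (show 2 * k + 2 ≤ 4 * k + 3 by omega), range_eq_Ico]
  have htail : ∑ i ∈ Ico (2 * k + 2) (4 * k + 3), c i = ∑ j ∈ range (2 * k + 1), c j := by
    rw [Finset.sum_Ico_eq_sum_range]
    have h1 : (4 * k + 3) - (2 * k + 2) = 2 * k + 1 := by omega
    rw [h1]
    have h2 : ∀ j ∈ range (2 * k + 1), c (2 * k + 2 + j) = c (2 * k + 1 - 1 - j) := by
      intro j hj
      rw [mem_range] at hj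
      have := hcsym (2 * k - j) (by omega)
      have h3 : 4 * k + 2 - (2 * k - j) = 2 * k + 2 + j := by omega
      rw [h3] at this
      rw [← this]
      congr 1
    rw [Finset.sum_congr rfl h2]
    exact Finset.sum_range_reflect c (2 * k + 1)
  have hhead : ∑ i ∈ range (2 * k + 2), c i = ∑ i ∈ range (2 * k + 1), c i := by
    rw [Finset.sum_range_succ, hmid, add_zero]
  have htotal : ∑ i ∈ range (4 * k + 3), c i = 2 * ∑ i ∈ range (2 * k + 1), c i := by
    rw [hsplit, htail, hhead]; ring
  have hT : Even (∑ i ∈ range (2 * k + 1), c i) :=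
    Finset.even_sum _ fun i _ => hceven i
  obtain ⟨t, ht⟩ := hT
  rw [htotal, ht]
  exact ⟨t, by ring⟩

theorem sig_cong_mod4_dims_4k_plus_2 (k k' : ℕ) (a b : ℕ → ℤ)
    (hduala : ∀ i ≤ 4 * k + 2, a i = a (4 * k + 2 - i)) (hzeroa : ∀ i > 4 * k + 2, a i = 0)
    (hdualb : ∀ i ≤ 4 * k' + 2, b i = b (4 * k' + 2 - i)) (hzerob : ∀ i > 4 * k' + 2, b i = 0)
    (heuler : ∑ i ∈ range (4 * k + 3), (-1) ^ i * a i =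
        ∑ i ∈ range (4 * k' + 3), (-1) ^ i * b i) :
    (∑ i ∈ range (4 * k + 3), a i) ≡ (∑ i ∈ range (4 * k' + 3), b i) [ZMOD 4] := by
  have ha := key_div4 k a hduala
  have hb := key_div4 k' b hdualb
  have hexp : ∀ (n : ℕ) (f : ℕ → ℤ), ∑ i ∈ range n, (1 + (-1) ^ i) * f i
      = ∑ i ∈ range n, f i + ∑ i ∈ range n, (-1) ^ i * f i := by
    intro n f
    rw [← Finset.sum_add_distrib]
    exact Finset.sum_congr rfl fun i _ => by ring
  rw [hexp] at ha hb
  rw [Int.ModEq]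
  have : (4 : ℤ) ∣ (∑ i ∈ range (4 * k + 3), a i) - (∑ i ∈ range (4 * k' + 3), b i) := by
    have := Int.dvd_sub ha hb
    rw [heuler] at this
    have heq : (∑ i ∈ range (4 * k + 3), a i + ∑ i ∈ range (4 * k' + 3), (-1) ^ i * b i)
        - (∑ i ∈ range (4 * k' + 3), b i + ∑ i ∈ range (4 * k' + 3), (-1) ^ i * b i)
        = (∑ i ∈ range (4 * k + 3), a i) - (∑ i ∈ range (4 * k' + 3), b i) := by ring
    rwa [heq] at this
  omega
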